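/- Let G be a group and A : G → SU(2) an irreducible homomorphism. Then the set of homomorphisms χ : G → {±1} such that χ·A is conjugate to A in SU(2) forms a subgroup of Hom(G, {±1}) of order at most 4. -/

import Mathlib

open Quaternion

/-- The group `SU(2)`, identified with the group of unit quaternions. -/
noncomputable abbrev SU2 : Type := Metric.sphere (0 : ℍ[ℝ]) 1

/-- The quaternion `i`. -/
noncomputable def qi : ℍ[ℝ] := ⟨0,1,0,0⟩
/-- The quaternion `j`. -/
noncomputable def qj : ℍ[ℝ] := ⟨0,0,1,0⟩
/-- The quaternion `k`. -/
noncomputable def qk : ℍ[ℝ] := ⟨0,0,0,1⟩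

lemma mem_SU2_of_normSq {q : ℍ[ℝ]} (h : Quaternion.normSq q = 1) :
    q ∈ Metric.sphere (0 : ℍ[ℝ]) 1 := by
  rw [mem_sphere_zero_iff_norm, norm_eq_sqrt_real_inner, Quaternion.inner_self, h]
  simp

/-- `i` as a unit quaternion. -/
noncomputable def iSU : SU2 := ⟨qi, mem_SU2_of_normSq (by rw [Quaternion.normSq_def']; simp [qi])⟩
/-- `j` as a unit quaternion. -/
noncomputable def jSU : SU2 := ⟨qj, mem_SU2_of_normSq (by rw [Quaternion.normSq_def']; simp [qj])⟩
/-- `k` as a unit quaternion. -/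
noncomputable def kSU : SU2 := ⟨qk, mem_SU2_of_normSq (by rw [Quaternion.normSq_def']; simp [qk])⟩
/-- `-1` as a unit quaternion. -/
noncomputable def negOne : SU2 := ⟨-1, by simp⟩

/-- The circle subgroup `S¹` of unit complex numbers `a + b·i` inside the unit
quaternions. -/
noncomputable def circleSet : Set SU2 :=
  {u | (u : ℍ[ℝ]).imJ = 0 ∧ (u : ℍ[ℝ]).imK = 0}

/-- The binary dihedral group `S¹ ∪ j·S¹` inside the unit quaternions. -/
noncomputable def binDihSet : Set SU2 :=
  circleSet ∪ (fun w => jSU * w) '' circleSet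

/-- A homomorphism to `SU(2)` is irreducible if its image is not contained in any
conjugate of the circle `S¹`. -/
noncomputable def IsIrredRep {G : Type*} [Group G] (A : G →* SU2) : Prop :=
  ¬ ∃ g : SU2, ∀ x : G, g * A x * g⁻¹ ∈ circleSet

/-- The embedding of `{±1}` into the center of `SU(2)`. -/
noncomputable def sgn (s : ℤˣ) : SU2 := if s = 1 then 1 else negOne

/-! ### Auxiliary lemmas -/

section Aux

private lemma coeMulSU (u v : SU2) : ((u * v : SU2) : ℍ[ℝ]) = (u : ℍ[ℝ]) * v := rfl

private lemma coeInvSU (u : SU2) : ((u⁻¹ : SU2) : ℍ[ℝ]) = (u : ℍ[ℝ])⁻¹ := Metric.unitSphere.coe_inv u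

private lemma normSq_coeSU (u : SU2) : normSq (u : ℍ[ℝ]) = 1 := by
  have h : ‖(u : ℍ[ℝ])‖ = 1 := mem_sphere_zero_iff_norm.mp u.2
  rw [normSq_eq_norm_mul_self, h]; ring

private lemma negOne_central (u : SU2) : negOne * u = u * negOne :=
  Subtype.ext (by simp [coeMulSU, negOne])

private lemma negOne_sq : negOne * negOne = (1 : SU2) :=
  Subtype.ext (by simp [coeMulSU, negOne])

private lemma negOne_inv : (negOne : SU2)⁻¹ = negOne :=
  inv_eq_of_mul_eq_one_right negOne_sq

private lemma one_ne_negOne : (1 : SU2) ≠ negOne := by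
  intro h
  have := congrArg (Subtype.val) h
  simp [negOne] at this
  have h2 := congrArg QuaternionAlgebra.re this
  norm_num at h2

private lemma sgn_one' : sgn 1 = 1 := if_pos rfl

private lemma sgn_mul (s t : ℤˣ) : sgn (s * t) = sgn s * sgn t := by
  rcases Int.units_eq_one_or s with rfl | rfl <;> rcases Int.units_eq_one_or t with rfl | rfl <;>
    simp [sgn, negOne_sq]

private lemma sgn_central (s : ℤˣ) (u : SU2) : sgn s * u = u * sgn s := by
  rcases Int.units_eq_one_or s with rfl | rfl <;> simp [sgn, negOne_central]

private lemma sgn_inj {s t : ℤˣ} (h : sgn s = sgn t) : s = t := by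
  rcases Int.units_eq_one_or s with rfl | rfl <;> rcases Int.units_eq_one_or t with rfl | rfl <;>
    simp_all [sgn, one_ne_negOne, one_ne_negOne.symm]

private lemma sq_eq_oneSU {u : SU2} (h : u * u = 1) : u = 1 ∨ u = negOne := by
  have hq : ((u : ℍ[ℝ]) - 1) * ((u : ℍ[ℝ]) + 1) = 0 := by
    have := congrArg (Subtype.val) h
    rw [coeMulSU] at this
    have h1 : ((u : ℍ[ℝ])) * u = 1 := this
    noncomm_ring [h1]
  rcases mul_eq_zero.mp hq with h' | h'
  · left; exact Subtype.ext (by rw [sub_eq_zero] at h'; simpa using h')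
  · right; exact Subtype.ext (by simpa [negOne, eq_neg_iff_add_eq_zero] using h')

private lemma qi_re : qi.re = 0 := rfl
private lemma qi_imI : qi.imI = 1 := rfl
private lemma qi_imJ : qi.imJ = 0 := rfl
private lemma qi_imK : qi.imK = 0 := rfl

private lemma comm_qi_iff (x : ℍ[ℝ]) : x * qi = qi * x ↔ x.imJ = 0 ∧ x.imK = 0 := by
  constructor
  · intro h
    have h1 := congrArg QuaternionAlgebra.imJ h
    have h2 := congrArg QuaternionAlgebra.imK h
    simp [qi_re, qi_imI, qi_imJ, qi_imK, Quaternion.imJ_mul, Quaternion.imK_mul] at h1 h2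
    constructor <;> linarith
  · intro ⟨h1, h2⟩
    ext <;> simp [qi_re, qi_imI, qi_imJ, qi_imK, Quaternion.re_mul, Quaternion.imI_mul, Quaternion.imJ_mul,
      Quaternion.imK_mul, h1, h2]

private lemma smul_conj (s : ℝ) (hs : s ≠ 0) (c x : ℍ[ℝ]) :
    (s • c) * x * (s • c)⁻¹ = c * x * c⁻¹ := by
  rw [smul_inv₀]
  rw [smul_mul_assoc, smul_mul_assoc, mul_smul_comm, smul_smul]
  rw [mul_inv_cancel₀ hs, one_smul]

set_option maxHeartbeats 1000000 in
private lemma centralizer_eq {G : Type*} [Group G] (A : G →* SU2) (hA : IsIrredRep A)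
    (u : SU2) (hu : ∀ g, u * A g = A g * u) : u = 1 ∨ u = negOne := by
  by_contra hcon
  push_neg at hcon
  obtain ⟨hu1, hun⟩ := hcon
  set q : ℍ[ℝ] := (u : ℍ[ℝ]) with hq
  set v : ℍ[ℝ] := ⟨0, q.imI, q.imJ, q.imK⟩ with hv
  have hv_re : v.re = 0 := rfl
  have hv_imI : v.imI = q.imI := rfl
  have hv_imJ : v.imJ = q.imJ := rfl
  have hv_imK : v.imK = q.imK := rfl
  have hqv : q = ((q.re : ℝ) : ℍ[ℝ]) + v := by ext <;> simp [hv_re, hv_imI, hv_imJ, hv_imK]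
  have hvne : v ≠ 0 := by
    intro h0
    have h1 : q.imI = 0 ∧ q.imJ = 0 ∧ q.imK = 0 :=
      ⟨congrArg QuaternionAlgebra.imI h0, congrArg QuaternionAlgebra.imJ h0, congrArg QuaternionAlgebra.imK h0⟩
    have hn : normSq q = 1 := normSq_coeSU u
    rw [normSq_def'] at hn
    rw [h1.1, h1.2.1, h1.2.2] at hn
    have hre : q.re = 1 ∨ q.re = -1 := by
      have : q.re * q.re = 1 := by nlinarith
      exact mul_self_eq_one_iff.mp this
    rcases hre with h | h
    · exact hu1 (Subtype.ext (by rw [← hq]; ext <;> simp [h, h1.1, h1.2.1, h1.2.2]))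
    · exact hun (Subtype.ext (by rw [← hq]; ext <;> simp [negOne, h, h1.1, h1.2.1, h1.2.2]))
  have hcommv : ∀ g : G, (A g : ℍ[ℝ]) * v = v * (A g : ℍ[ℝ]) := by
    intro g
    have h1 : q * (A g : ℍ[ℝ]) = (A g : ℍ[ℝ]) * q := by
      have := congrArg Subtype.val (hu g)
      rw [coeMulSU, coeMulSU] at this
      exact this
    have h2 := h1
    rw [hqv, add_mul, mul_add, coe_commutes] at h2
    have := add_left_cancel h2
    exact this.symm
  set r : ℝ := ‖v‖ with hrdef
  have hrne : r ≠ 0 := norm_ne_zero_iff.mpr hvne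
  have hr2 : r ^ 2 = q.imI ^ 2 + q.imJ ^ 2 + q.imK ^ 2 := by
    have h' : normSq v = r * r := normSq_eq_norm_mul_self v
    rw [normSq_def'] at h'
    simp only [hv] at h'
    nlinarith [h']
  set c : ℍ[ℝ] := ((r : ℝ) : ℍ[ℝ]) * qi + v with hc
  by_cases hc0 : c = 0
  · apply hA
    refine ⟨1, fun x => ?_⟩
    have hvi : v = -(((r : ℝ) : ℍ[ℝ]) * qi) := by
      rw [eq_neg_iff_add_eq_zero, add_comm]; exact hc0
    have hcomm : (A x : ℍ[ℝ]) * qi = qi * (A x : ℍ[ℝ]) := by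
      have h1 := hcommv x
      rw [hvi] at h1
      have h2 : (A x : ℍ[ℝ]) * (((r : ℝ) : ℍ[ℝ]) * qi) =
          (((r : ℝ) : ℍ[ℝ]) * qi) * (A x : ℍ[ℝ]) := by
        have := h1
        simp only [mul_neg, neg_mul] at this
        exact neg_injective this
      rw [← mul_assoc, ← coe_commutes, mul_assoc, mul_assoc] at h2
      exact mul_left_cancel₀ (fun h => hrne (Quaternion.coe_injective (by simpa using h))) h2
    simpa [circleSet, coeMulSU, coeInvSU] using (comm_qi_iff _).mp hcomm
  · apply hA
    have hnc : ‖c‖ ≠ 0 := norm_ne_zero_iff.mpr hc0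
    have hmem : (‖c‖⁻¹ : ℝ) • c ∈ Metric.sphere (0 : ℍ[ℝ]) 1 := by
      rw [mem_sphere_zero_iff_norm, norm_smul]
      simp [hnc]
    obtain ⟨chat, hchat⟩ : ∃ w : SU2, (w : ℍ[ℝ]) = (‖c‖⁻¹ : ℝ) • c := ⟨⟨_, hmem⟩, rfl⟩
    refine ⟨chat, fun x => ?_⟩
    · have hkey : c * v = (((r : ℝ) : ℍ[ℝ]) * qi) * c := by
        ext <;>
          simp only [hc, hv_re, hv_imI, hv_imJ, hv_imK, qi_re, qi_imI, qi_imJ, qi_imK, Quaternion.re_mul, Quaternion.imI_mul, Quaternion.imJ_mul,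
            Quaternion.imK_mul, Quaternion.re_add, Quaternion.imI_add, Quaternion.imJ_add,
            Quaternion.imK_add, Quaternion.re_coe, Quaternion.imI_coe, Quaternion.imJ_coe,
            Quaternion.imK_coe] <;>
          nlinarith [hr2]
      have hcvc : c * v * c⁻¹ = ((r : ℝ) : ℍ[ℝ]) * qi := by
        rw [hkey, mul_assoc, mul_inv_cancel₀ hc0, mul_one]
      have hy : ∀ z : ℍ[ℝ], z * v = v * z → (c * z * c⁻¹) * qi = qi * (c * z * c⁻¹) := by
        intro z hz
        have h1 : (c * z * c⁻¹) * (((r : ℝ) : ℍ[ℝ]) * qi) =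
            (((r : ℝ) : ℍ[ℝ]) * qi) * (c * z * c⁻¹) := by
          rw [← hcvc]
          simp only [mul_assoc, inv_mul_cancel_left₀ hc0]
          rw [← mul_assoc z v, hz, mul_assoc]
        have h2 : (((r : ℝ) : ℍ[ℝ])) * ((c * z * c⁻¹) * qi) =
            (((r : ℝ) : ℍ[ℝ])) * (qi * (c * z * c⁻¹)) := by
          calc ((r : ℝ) : ℍ[ℝ]) * ((c * z * c⁻¹) * qi)
              = (((r : ℝ) : ℍ[ℝ]) * (c * z * c⁻¹)) * qi := (mul_assoc _ _ _).symm
            _ = ((c * z * c⁻¹) * ((r : ℝ) : ℍ[ℝ])) * qi := by rw [coe_commutes]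
            _ = (c * z * c⁻¹) * (((r : ℝ) : ℍ[ℝ]) * qi) := mul_assoc _ _ _
            _ = (((r : ℝ) : ℍ[ℝ]) * qi) * (c * z * c⁻¹) := h1
            _ = ((r : ℝ) : ℍ[ℝ]) * (qi * (c * z * c⁻¹)) := mul_assoc _ _ _
        exact mul_left_cancel₀ (fun h => hrne (Quaternion.coe_injective (by simpa using h))) h2
      have hcoe : ((chat * A x * chat⁻¹ : SU2) : ℍ[ℝ]) = c * (A x : ℍ[ℝ]) * c⁻¹ := by
        rw [coeMulSU, coeMulSU, coeInvSU, hchat]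
        exact smul_conj _ (inv_ne_zero hnc) c _
      have hqi' := (comm_qi_iff _).mp (hy (A x : ℍ[ℝ]) (hcommv x))
      constructor
      · rw [hcoe]; exact hqi'.1
      · rw [hcoe]; exact hqi'.2

private lemma conj_sgn (s : ℤˣ) (v w : SU2) :
    sgn s * (v * w * v⁻¹) = v * (sgn s * w) * v⁻¹ := by
  rw [← mul_assoc, ← mul_assoc, sgn_central s v, mul_assoc v]

private lemma prod_witness {G : Type*} [Group G] (A : G →* SU2) {χ χ' : G →* ℤˣ} {u v : SU2}
    (h : ∀ g, sgn (χ g) * A g = u * A g * u⁻¹) (h' : ∀ g, sgn (χ' g) * A g = v * A g * v⁻¹) :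
    ∀ g, sgn ((χ * χ') g) * A g = (v * u) * A g * (v * u)⁻¹ := by
  intro g
  calc sgn ((χ * χ') g) * A g
      = sgn (χ g) * (sgn (χ' g) * A g) := by rw [MonoidHom.mul_apply, sgn_mul, mul_assoc]
    _ = sgn (χ g) * (v * A g * v⁻¹) := by rw [h' g]
    _ = v * (sgn (χ g) * A g) * v⁻¹ := conj_sgn _ _ _
    _ = v * (u * A g * u⁻¹) * v⁻¹ := by rw [h g]
    _ = (v * u) * A g * (v * u)⁻¹ := by group

private lemma witness_re_zero {G : Type*} [Group G] (A : G →* SU2) (hA : IsIrredRep A)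
    {χ : G →* ℤˣ} (hχ : χ ≠ 1) {u : SU2}
    (h : ∀ g, sgn (χ g) * A g = u * A g * u⁻¹) : (u : ℍ[ℝ]).re = 0 := by
  have hcomm : ∀ g, (u * u) * A g = A g * (u * u) := by
    intro g
    have e2 : u * (sgn (χ g) * A g) * u⁻¹ = sgn (χ g) * (u * A g * u⁻¹) := (conj_sgn _ _ _).symm
    have e3 : sgn (χ g) * (sgn (χ g) * A g) = A g := by
      rw [← mul_assoc, ← sgn_mul, Int.units_mul_self, sgn_one', one_mul]
    have key : (u * u) * A g * (u * u)⁻¹ = A g := by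
      calc (u * u) * A g * (u * u)⁻¹
          = u * (u * A g * u⁻¹) * u⁻¹ := by group
        _ = u * (sgn (χ g) * A g) * u⁻¹ := by rw [h g]
        _ = sgn (χ g) * (u * A g * u⁻¹) := e2
        _ = sgn (χ g) * (sgn (χ g) * A g) := by rw [← h g]
        _ = A g := e3
    have := mul_inv_eq_iff_eq_mul.mp key
    exact this
  rcases centralizer_eq A hA (u * u) hcomm with h1 | h1
  · exfalso
    apply hχ
    have hw : ∀ g, sgn (χ g) * A g = A g := by
      intro g
      rcases sq_eq_oneSU h1 with rfl | rfl
      · rw [h g]; simp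
      · rw [h g, negOne_inv, negOne_central (A g), mul_assoc, negOne_sq, mul_one]
    ext g
    have h2 : sgn (χ g) * A g = sgn 1 * A g := by rw [hw g, sgn_one', one_mul]
    have h3 := sgn_inj (mul_right_cancel h2)
    simpa using h3
  · have hqq : (u : ℍ[ℝ]) * (u : ℍ[ℝ]) = -1 := by
      have := congrArg Subtype.val h1
      rw [coeMulSU] at this
      simpa [negOne] using this
    have hn : normSq (u : ℍ[ℝ]) = 1 := normSq_coeSU u
    rw [normSq_def'] at hn
    have hre := congrArg QuaternionAlgebra.re hqq
    simp [Quaternion.re_mul] at hre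
    nlinarith [hre, hn]

end Aux

/-- For an irreducible `A : G →* SU(2)`, the characters `χ : G →* {±1}` with `χ·A`
conjugate to `A` form a subgroup of `Hom(G, {±1})` of order at most `4`. -/
theorem stabilizer_characters_subgroup_card_le_four {G : Type*} [Group G]
    (A : G →* SU2) (hA : IsIrredRep A) :
    ∃ H : Subgroup (G →* ℤˣ),
      (H : Set (G →* ℤˣ)) =
        {χ : G →* ℤˣ | ∃ u : SU2, ∀ g : G, sgn (χ g) * A g = u * A g * u⁻¹} ∧
      Nat.card H ≤ 4 := by
  classical
  set S : Set (G →* ℤˣ) :=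
    {χ : G →* ℤˣ | ∃ u : SU2, ∀ g : G, sgn (χ g) * A g = u * A g * u⁻¹} with hSdef
  have hmul : ∀ {χ χ' : G →* ℤˣ}, χ ∈ S → χ' ∈ S → χ * χ' ∈ S := by
    rintro χ χ' ⟨u, hu⟩ ⟨v, hv⟩
    exact ⟨v * u, prod_witness A hu hv⟩
  have hone : (1 : G →* ℤˣ) ∈ S := ⟨1, fun g => by simp [sgn_one']⟩
  have hsq : ∀ χ : G →* ℤˣ, χ * χ = 1 := by
    intro χ; ext g; simpa using Int.units_mul_self (χ g)
  have hinvS : ∀ {χ : G →* ℤˣ}, χ ∈ S → χ⁻¹ ∈ S := by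
    intro χ hχ
    have hinv : χ⁻¹ = χ := inv_eq_of_mul_eq_one_right (hsq χ)
    rw [hinv]; exact hχ
  set HH : Subgroup (G →* ℤˣ) :=
    { carrier := S, one_mem' := hone, mul_mem' := hmul, inv_mem' := hinvS } with hHH
  refine ⟨HH, rfl, ?_⟩
  by_contra hle
  push_neg at hle
  haveI : Finite ↥HH := Nat.finite_of_card_ne_zero (by omega)
  haveI : Fintype ↥HH := Fintype.ofFinite _
  have h5 : Fintype.card (Fin 5) ≤ Fintype.card ↥HH := by
    rw [Fintype.card_fin, ← Nat.card_eq_fintype_card]; omega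
  obtain ⟨f⟩ := Function.Embedding.nonempty_of_card_le h5
  have hmemS : ∀ k : Fin 5, ((f k : ↥HH) : G →* ℤˣ) ∈ S := fun k => (f k).2
  set χs : Fin 4 → (G →* ℤˣ) :=
    fun i => ((f i.succ : ↥HH) : G →* ℤˣ) * ((f 0 : ↥HH) : G →* ℤˣ) with hχs
  have hS4 : ∀ i, χs i ∈ S := fun i => hmul (hmemS i.succ) (hmemS 0)
  have hne1 : ∀ i, χs i ≠ 1 := by
    intro i hEq
    have h' := eq_inv_of_mul_eq_one_left hEq
    rw [inv_eq_of_mul_eq_one_right (hsq _)] at h'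
    exact Fin.succ_ne_zero i (f.injective (Subtype.ext h'))
  have hprodne : ∀ i j : Fin 4, i ≠ j → χs i * χs j ≠ 1 := by
    intro i j hij hEq
    have h1 : χs i * χs j =
        ((f i.succ : ↥HH) : G →* ℤˣ) * ((f j.succ : ↥HH) : G →* ℤˣ) := by
      simp only [hχs]
      rw [mul_mul_mul_comm, hsq, mul_one]
    rw [h1] at hEq
    have h' := eq_inv_of_mul_eq_one_left hEq
    rw [inv_eq_of_mul_eq_one_right (hsq _)] at h'
    exact hij (Fin.succ_injective _ (f.injective (Subtype.ext h')))
  choose uu huu using fun i => hS4 i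
  have hre : ∀ i, ((uu i : SU2) : ℍ[ℝ]).re = 0 :=
    fun i => witness_re_zero A hA (hne1 i) (huu i)
  have hreij : ∀ i j, i ≠ j →
      (((uu j : SU2) : ℍ[ℝ]) * ((uu i : SU2) : ℍ[ℝ])).re = 0 := by
    intro i j hij
    have := witness_re_zero A hA (hprodne i j hij) (prod_witness A (huu i) (huu j))
    rwa [coeMulSU] at this
  have hinner0 : ∀ i j, i ≠ j →
      (inner ℝ ((uu i : SU2) : ℍ[ℝ]) ((uu j : SU2) : ℍ[ℝ]) : ℝ) = 0 := by
    intro i j hij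
    rw [Quaternion.inner_def]
    have hstar : star ((uu j : SU2) : ℍ[ℝ]) = -((uu j : SU2) : ℍ[ℝ]) := by
      ext <;> simp [hre j]
    rw [hstar]
    have hsymm : (((uu i : SU2) : ℍ[ℝ]) * ((uu j : SU2) : ℍ[ℝ])).re
        = (((uu j : SU2) : ℍ[ℝ]) * ((uu i : SU2) : ℍ[ℝ])).re := by
      simp only [Quaternion.re_mul]; ring
    simp [hsymm, hreij i j hij]
  have hinner1 : ∀ i, (inner ℝ ((uu i : SU2) : ℍ[ℝ]) ((uu i : SU2) : ℍ[ℝ]) : ℝ) = 1 :=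
    fun i => by rw [Quaternion.inner_self, normSq_coeSU]
  have hinner1u : ∀ i, (inner ℝ (1 : ℍ[ℝ]) ((uu i : SU2) : ℍ[ℝ]) : ℝ) = 0 := fun i => by
    rw [Quaternion.inner_def, one_mul]
    simp [hre i]
  have hinneru1 : ∀ i, (inner ℝ ((uu i : SU2) : ℍ[ℝ]) (1 : ℍ[ℝ]) : ℝ) = 0 := fun i => by
    rw [Quaternion.inner_def]
    simp [hre i]
  have h11 : (inner ℝ (1 : ℍ[ℝ]) (1 : ℍ[ℝ]) : ℝ) = 1 := by
    rw [Quaternion.inner_self]; simp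
  set F : Fin 5 → ℍ[ℝ] := fun k => Fin.cases 1 (fun i => ((uu i : SU2) : ℍ[ℝ])) k with hF
  have hON : Orthonormal ℝ F := by
    rw [orthonormal_iff_ite]
    intro a b
    induction a using Fin.cases with
    | zero =>
      induction b using Fin.cases with
      | zero => simpa [hF] using h11
      | succ j => simpa [hF, (Fin.succ_ne_zero j).symm] using hinner1u j
    | succ i =>
      induction b using Fin.cases with
      | zero => simpa [hF, Fin.succ_ne_zero i] using hinneru1 i
      | succ j =>
        by_cases hij : i = j
        · subst hij
          simpa [hF] using hinner1 i
        · have : Fin.succ i ≠ Fin.succ j := fun h => hij (Fin.succ_injective _ h)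
          simpa [hF, this] using hinner0 i j hij
  have hLI := hON.linearIndependent
  have hcard := hLI.fintype_card_le_finrank
  rw [Fintype.card_fin, Quaternion.finrank_eq_four] at hcard
  omega
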